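/- arXiv:1807.10863 — 3 statements merged into one kernel-verified Lean document; each statement's English description precedes it below -/
import Mathlib

section
/- Let n ≥ 2, let α be a nonzero real number, let λ = (λ_1,…,λ_n) ∈ ℤⁿ be strongly dominant (λ_1 > λ_2 > … > λ_n), and let μ = (μ_1,…,μ_n) ∈ ℤⁿ be dominant (μ_1 ≥ … ≥ μ_n). Assume that the matrix B_{λ,μ} is invertible. Then the set O^G_{(U_λ,α)} ∩ pr⁻¹(O^K_{U_μ}) is either empty or consists of a single U(n)-orbit under the action k·(M,v) = (k M k*, k v); that is, n(O^G_{(λ,α)}, O^K_μ) ≤ 1. (Theorem 3.) -/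
open Matrix Complex Finset

/-- The outer matrix `z w*` with `(l,j)` entry `z l * conj (w j)`. -/
noncomputable def outerMat {n : ℕ} (z w : Fin n → ℂ) : Matrix (Fin n) (Fin n) ℂ :=
  Matrix.of fun l j => z l * (starRingEnd ℂ) (w j)

/-- The generic coadjoint orbit `O^G_{(U,α)}` of the Heisenberg motion group,
realized in `M_n(ℂ) × ℂⁿ`. -/
noncomputable def genOrbit {n : ℕ} (U : Matrix (Fin n) (Fin n) ℂ) (α : ℝ) :
    Set (Matrix (Fin n) (Fin n) ℂ × (Fin n → ℂ)) :=
  {p | ∃ k : Matrix.unitaryGroup (Fin n) ℂ, ∃ z : Fin n → ℂ,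
    p = ((k : Matrix (Fin n) (Fin n) ℂ) *
          (U + ((Complex.I * (α : ℂ)) / 2) • outerMat z z) *
          star (k : Matrix (Fin n) (Fin n) ℂ),
        (α : ℂ) • (k : Matrix (Fin n) (Fin n) ℂ).mulVec z)}

/-- `pr⁻¹(O^K_X)` realized in `M_n(ℂ) × ℂⁿ`. -/
noncomputable def prInv {n : ℕ} (X : Matrix (Fin n) (Fin n) ℂ) :
    Set (Matrix (Fin n) (Fin n) ℂ × (Fin n → ℂ)) :=
  {p | ∃ A : Matrix.unitaryGroup (Fin n) ℂ,
    p.1 = (A : Matrix (Fin n) (Fin n) ℂ) * X * star (A : Matrix (Fin n) (Fin n) ℂ)}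

/-- `U_λ = i diag(λ)`. -/
noncomputable def Umat {n : ℕ} (lam : Fin n → ℤ) : Matrix (Fin n) (Fin n) ℂ :=
  Complex.I • Matrix.diagonal fun i => ((lam i : ℤ) : ℂ)

/-- The matrix `B_{λ,μ}` with `(i,j)` entry `∏_{k ≠ j} (μ_i − λ_k)`. -/
noncomputable def Bmat {n : ℕ} (lam mu : Fin n → ℤ) : Matrix (Fin n) (Fin n) ℝ :=
  Matrix.of fun i j => ∏ k ∈ Finset.univ.erase j, ((mu i : ℝ) - (lam k : ℝ))

lemma det_diag_add_outer {n : ℕ} (d u v : Fin n → ℂ) :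
    (Matrix.diagonal d + outerMat u v).det
      = (∏ k, d k) + ∑ j, u j * (starRingEnd ℂ) (v j) * ∏ k ∈ Finset.univ.erase j, d k := by
  classical
  set cv : Fin n → ℂ := fun t => (starRingEnd ℂ) (v t) with hcv
  set m : Fin n → Fin n → ℂ := fun l => u l • cv with hm
  set m' : Fin n → Fin n → ℂ := fun l => d l • (Pi.single l 1 : Fin n → ℂ) with hm'
  have hdetfn : ∀ X : Matrix (Fin n) (Fin n) ℂ,
      Matrix.detRowAlternating.toMultilinearMap X = X.det := fun _ => rfl
  have hrows : (Matrix.diagonal d + outerMat u v) = Matrix.of (m + m') := by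
    funext l j
    by_cases h : l = j <;>
      simp [Matrix.add_apply, Matrix.diagonal_apply, outerMat, Pi.single_apply, hm, hm', h,
        add_comm, cv]
  have h1 : (Matrix.diagonal d + outerMat u v).det
      = Matrix.detRowAlternating (m + m') := by rw [hrows]; rfl
  rw [h1, show Matrix.detRowAlternating (m + m')
      = Matrix.detRowAlternating.toMultilinearMap (m + m') from rfl,
    Matrix.detRowAlternating.toMultilinearMap.map_add_univ m m']
  have key : ∀ s : Finset (Fin n),
      Matrix.detRowAlternating.toMultilinearMap (s.piecewise m m')
        = (if s = ∅ then ∏ k, d k else 0)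
          + ∑ j, (if s = {j} then u j * cv j * ∏ k ∈ Finset.univ.erase j, d k else 0) := by
    intro s
    have hsc : s.piecewise m m'
        = fun l => (if l ∈ s then u l else d l) •
            (if l ∈ s then cv else (Pi.single l 1 : Fin n → ℂ)) := by
      funext l
      by_cases h : l ∈ s <;> simp [Finset.piecewise, h, hm, hm']
    rw [hsc, Matrix.detRowAlternating.toMultilinearMap.map_smul_univ]
    set b : Fin n → Fin n → ℂ :=
      fun l => if l ∈ s then cv else (Pi.single l 1 : Fin n → ℂ) with hb
    rcases eq_or_ne s ∅ with rfl | h0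
    · have hbone : b = (1 : Matrix (Fin n) (Fin n) ℂ) := by
        funext l j
        by_cases h : l = j <;> simp [hb, Matrix.one_apply, Pi.single_apply, h]
      erw [hdetfn]; rw [hbone, Matrix.det_one]
      have : ∀ j : Fin n, (∅ : Finset (Fin n)) ≠ {j} :=
        fun j => (Finset.singleton_ne_empty j).symm
      simp [this]
    · by_cases h1 : s.card = 1
      · obtain ⟨j, rfl⟩ := Finset.card_eq_one.mp h1
        have hbu : b = (1 : Matrix (Fin n) (Fin n) ℂ).updateRow j cv := by
          funext l t
          rcases eq_or_ne l j with rfl | h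
          · simp [hb]
          · simp only [hb, Finset.mem_singleton, h, if_false, Matrix.updateRow_ne h,
              Matrix.one_apply, Pi.single_apply]
            by_cases ht : l = t <;> simp [ht, eq_comm]
        have hdetb : Matrix.detRowAlternating.toMultilinearMap b = cv j := by
          erw [hdetfn]; rw [hbu, show (1 : Matrix (Fin n) (Fin n) ℂ).updateRow j cv
              = ((1 : Matrix (Fin n) (Fin n) ℂ).updateCol j cv)ᵀ by
              rw [← Matrix.updateRow_transpose, Matrix.transpose_one],
            Matrix.det_transpose, ← Matrix.cramer_apply, Matrix.cramer_one]
          rfl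
        have hprod : (∏ l, if l ∈ ({j} : Finset (Fin n)) then u l else d l)
            = u j * ∏ k ∈ Finset.univ.erase j, d k := by
          rw [← Finset.mul_prod_erase Finset.univ _ (Finset.mem_univ j)]
          congr 1
          · simp
          · exact Finset.prod_congr rfl fun k hk => by
              simp [Finset.mem_singleton, (Finset.mem_erase.mp hk).1]
        rw [hdetb, hprod]
        have hsing : ∀ j' : Fin n, ({j} : Finset (Fin n)) = {j'} ↔ j = j' := by
          intro j'; exact Finset.singleton_inj
        simp only [Finset.singleton_ne_empty, if_false, hsing]
        rw [Finset.sum_ite_eq Finset.univ j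
          (fun j' => u j' * cv j' * ∏ k ∈ Finset.univ.erase j', d k)]
        simp [smul_eq_mul]; ring
      · have h2 : 1 < s.card := by
          have : s.card ≠ 0 := fun h => h0 (Finset.card_eq_zero.mp h)
          omega
        obtain ⟨a, ha, a', ha', haa⟩ := Finset.one_lt_card.mp h2
        have hbz : Matrix.detRowAlternating.toMultilinearMap b = 0 := by
          rw [show Matrix.detRowAlternating.toMultilinearMap b
              = Matrix.detRowAlternating b from rfl]
          refine Matrix.detRowAlternating.map_eq_zero_of_eq b ?_ haa
          simp [hb, ha, ha']
        have hsj : ∀ j : Fin n, s ≠ {j} := by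
          intro j h; rw [h] at h1; simp at h1
        rw [hbz]
        simp [h0, hsj]
  rw [Finset.sum_congr rfl fun s _ => key s, Finset.sum_add_distrib]
  congr 1
  · rw [Finset.sum_ite_eq' Finset.univ (∅ : Finset (Fin n)) (fun _ => ∏ k, d k)]
    simp
  · rw [Finset.sum_comm]
    refine Finset.sum_congr rfl fun j _ => ?_
    rw [Finset.sum_ite_eq' Finset.univ ({j} : Finset (Fin n))
      (fun _ => u j * cv j * ∏ k ∈ Finset.univ.erase j, d k)]
    simp [hcv]

lemma det_conj {n : ℕ} {k : Matrix (Fin n) (Fin n) ℂ} (hk : k * star k = 1)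
    (N : Matrix (Fin n) (Fin n) ℂ) : (k * N * star k).det = N.det := by
  have h := congrArg Matrix.det hk
  rw [Matrix.det_mul, Matrix.det_one] at h
  rw [Matrix.det_mul, Matrix.det_mul]
  calc k.det * N.det * (star k).det = N.det * (k.det * (star k).det) := by ring
  _ = N.det := by rw [h, mul_one]

lemma det_sub_smul_one_eq {n : ℕ} {k A M X : Matrix (Fin n) (Fin n) ℂ}
    (hk : k * star k = 1) (hA : A * star A = 1)
    (h : k * M * star k = A * X * star A) (x : ℂ) :
    (M - x • 1).det = (X - x • 1).det := by
  have e1 : k * (M - x • 1) * star k = A * (X - x • 1) * star A := by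
    rw [Matrix.mul_sub, Matrix.sub_mul, Matrix.mul_sub, Matrix.sub_mul, h]
    congr 1
    rw [Matrix.mul_smul, Matrix.smul_mul, Matrix.mul_one, hk,
      Matrix.mul_smul, Matrix.smul_mul, Matrix.mul_one, hA]
  calc (M - x • 1).det = (k * (M - x • 1) * star k).det := (det_conj hk _).symm
  _ = (A * (X - x • 1) * star A).det := by rw [e1]
  _ = (X - x • 1).det := det_conj hA _

lemma eigeq {n : ℕ} (lam mu : Fin n → ℤ) (c : ℂ) (z : Fin n → ℂ)
    (hdet : ∀ x : ℂ, ((Umat lam + c • outerMat z z) - x • 1).det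
      = (Umat mu - x • 1).det) (i : Fin n) :
    (∏ k, (Complex.I * ((lam k : ℂ) - (mu i : ℂ))))
      + ∑ j, c * (z j * (starRingEnd ℂ) (z j))
          * ∏ k ∈ Finset.univ.erase j, (Complex.I * ((lam k : ℂ) - (mu i : ℂ))) = 0 := by
  have h := hdet (Complex.I * (mu i : ℂ))
  have hL : (Umat lam + c • outerMat z z) - (Complex.I * (mu i : ℂ)) • 1
      = Matrix.diagonal (fun k => Complex.I * ((lam k : ℂ) - (mu i : ℂ)))
        + outerMat (c • z) z := by
    funext l j
    by_cases hlj : l = j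
    · subst hlj
      simp [Umat, outerMat, Matrix.diagonal_apply, Matrix.one_apply, Matrix.smul_apply,
        Matrix.add_apply, Matrix.sub_apply, smul_eq_mul]
      ring
    · simp [Umat, outerMat, Matrix.diagonal_apply, Matrix.one_apply, Matrix.smul_apply,
        Matrix.add_apply, Matrix.sub_apply, hlj, smul_eq_mul]
      ring
  have hR : Umat mu - (Complex.I * (mu i : ℂ)) • 1
      = Matrix.diagonal (fun k => Complex.I * ((mu k : ℂ) - (mu i : ℂ))) := by
    funext l j
    by_cases hlj : l = j
    · subst hlj
      simp [Umat, Matrix.diagonal_apply, Matrix.one_apply, Matrix.smul_apply,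
        Matrix.sub_apply, smul_eq_mul]
      ring
    · simp [Umat, Matrix.diagonal_apply, Matrix.one_apply, Matrix.smul_apply,
        Matrix.sub_apply, hlj, smul_eq_mul]
  rw [hL, hR, det_diag_add_outer, Matrix.det_diagonal] at h
  have hz : (∏ k, Complex.I * ((mu k : ℂ) - (mu i : ℂ))) = 0 :=
    Finset.prod_eq_zero (Finset.mem_univ i) (by simp)
  rw [hz] at h
  rw [← h]
  congr 1
  refine Finset.sum_congr rfl fun j _ => ?_
  simp only [Pi.smul_apply, smul_eq_mul]
  ring

lemma normSq_eq {n : ℕ} (lam mu : Fin n → ℤ) (hB : IsUnit (Bmat lam mu).det)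
    (c : ℂ) (hc : c ≠ 0) (z w : Fin n → ℂ)
    (hz : ∀ x : ℂ, ((Umat lam + c • outerMat z z) - x • 1).det = (Umat mu - x • 1).det)
    (hw : ∀ x : ℂ, ((Umat lam + c • outerMat w w) - x • 1).det = (Umat mu - x • 1).det)
    (j : Fin n) : Complex.normSq (z j) = Complex.normSq (w j) := by
  classical
  set r : Fin n → ℝ := fun j => Complex.normSq (z j) - Complex.normSq (w j) with hr
  have hBr : Bmat lam mu *ᵥ r = 0 := by
    funext i
    set P : Fin n → ℂ :=
      fun j => ∏ k ∈ Finset.univ.erase j, (Complex.I * ((lam k : ℂ) - (mu i : ℂ))) with hP0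
    have h1 := eigeq lam mu c z hz i
    have h2 := eigeq lam mu c w hw i
    have hZW : (∑ j, c * (z j * (starRingEnd ℂ) (z j)) * P j)
        = (∑ j, c * (w j * (starRingEnd ℂ) (w j)) * P j) := by
      linear_combination h1 - h2
    have h3 : (c * ∑ j, (r j : ℂ) * P j) = 0 := by
      rw [Finset.mul_sum]
      have hterm : ∀ j, c * ((r j : ℂ) * P j)
          = c * (z j * (starRingEnd ℂ) (z j)) * P j
            - c * (w j * (starRingEnd ℂ) (w j)) * P j := by
        intro j
        rw [hr, Complex.mul_conj, Complex.mul_conj]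
        push_cast
        ring
      rw [Finset.sum_congr rfl fun j _ => hterm j, Finset.sum_sub_distrib, hZW, sub_self]
    have h4 : (∑ j, (r j : ℂ) * P j) = 0 := by
      rcases mul_eq_zero.mp h3 with h | h
      · exact absurd h hc
      · exact h
    have hPval : ∀ j, P j = (-Complex.I) ^ (n - 1) * ((Bmat lam mu i j : ℝ) : ℂ) := by
      intro j
      show (∏ k ∈ Finset.univ.erase j, (Complex.I * ((lam k : ℂ) - (mu i : ℂ)))) = _
      have h5 : ∀ k ∈ Finset.univ.erase j, Complex.I * ((lam k : ℂ) - (mu i : ℂ))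
          = (-Complex.I) * ((((mu i : ℝ) - (lam k : ℝ)) : ℝ) : ℂ) := by
        intro k _; push_cast; ring
      rw [Finset.prod_congr rfl h5, Finset.prod_mul_distrib, Finset.prod_const,
        Finset.card_erase_of_mem (Finset.mem_univ j), Finset.card_univ, Fintype.card_fin]
      congr 1
      simp only [Bmat, Matrix.of_apply]
      push_cast
      rfl
    have h6 : ((-Complex.I) ^ (n - 1)) * (∑ j, (r j : ℂ) * ((Bmat lam mu i j : ℝ) : ℂ)) = 0 := by
      rw [Finset.mul_sum, ← h4]
      refine Finset.sum_congr rfl fun j _ => ?_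
      rw [hPval j]; ring
    have h7 : (∑ j, (r j : ℂ) * ((Bmat lam mu i j : ℝ) : ℂ)) = 0 := by
      rcases mul_eq_zero.mp h6 with h | h
      · exact absurd h (pow_ne_zero _ (neg_ne_zero.mpr Complex.I_ne_zero))
      · exact h
    have h8 : (∑ j, r j * Bmat lam mu i j) = 0 := by
      have : ((∑ j, r j * Bmat lam mu i j : ℝ) : ℂ) = 0 := by
        push_cast
        exact h7
      exact_mod_cast this
    show (Bmat lam mu *ᵥ r) i = 0
    rw [← h8]
    simp [Matrix.mulVec, dotProduct, mul_comm]
  have hr0 : r = 0 := by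
    have h5 : (Bmat lam mu)⁻¹ *ᵥ (Bmat lam mu *ᵥ r) = r := by
      rw [Matrix.mulVec_mulVec, Matrix.nonsing_inv_mul _ hB, Matrix.one_mulVec]
    rw [hBr, Matrix.mulVec_zero] at h5
    exact h5.symm
  have h9 := congrFun hr0 j
  simpa [hr, sub_eq_zero] using h9

lemma phase_conj {n : ℕ} (lam : Fin n → ℤ) (c : ℂ) (z w : Fin n → ℂ)
    (hnorm : ∀ j, Complex.normSq (z j) = Complex.normSq (w j)) :
    ∃ U : Matrix (Fin n) (Fin n) ℂ,
      U * star U = 1 ∧ star U * U = 1 ∧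
      U * (Umat lam + c • outerMat z z) * star U = Umat lam + c • outerMat w w ∧
      U *ᵥ z = w := by
  classical
  set φ : Fin n → ℂ := fun j => if z j = 0 then 1 else w j / z j with hφ
  have hφz : ∀ j, φ j * z j = w j := by
    intro j
    by_cases h : z j = 0
    · have h0 : Complex.normSq (w j) = 0 := by rw [← hnorm j, h]; simp
      have hw0 : w j = 0 := by simpa using h0
      simp [hφ, h, hw0]
    · simp [hφ, h, div_mul_cancel₀]
  have hφu : ∀ j, φ j * (starRingEnd ℂ) (φ j) = 1 := by
    intro j
    by_cases h : z j = 0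
    · simp [hφ, h]
    · have hz' : Complex.normSq (z j) ≠ 0 := by simpa [Complex.normSq_eq_zero] using h
      rw [Complex.mul_conj, hφ]
      simp only [h, if_false]
      rw [show Complex.normSq (w j / z j)
          = Complex.normSq (w j) / Complex.normSq (z j) from map_div₀ _ _ _,
        ← hnorm j, div_self hz']
      simp
  have hdiag : star (Matrix.diagonal φ) = Matrix.diagonal (star φ) := by
    rw [Matrix.star_eq_conjTranspose, Matrix.diagonal_conjTranspose]
  refine ⟨Matrix.diagonal φ, ?_, ?_, ?_, ?_⟩
  · rw [hdiag, Matrix.diagonal_mul_diagonal]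
    rw [show (fun i => φ i * star φ i) = fun _ => (1 : ℂ) from funext fun j => by
      simpa [Complex.star_def] using hφu j]
    exact Matrix.diagonal_one
  · rw [hdiag, Matrix.diagonal_mul_diagonal]
    rw [show (fun i => star φ i * φ i) = fun _ => (1 : ℂ) from funext fun j => by
      simpa [Complex.star_def, mul_comm] using hφu j]
    exact Matrix.diagonal_one
  · rw [hdiag]
    funext l j
    rw [Matrix.mul_diagonal, Matrix.diagonal_mul]
    simp only [Umat, Matrix.add_apply, Matrix.smul_apply, outerMat, Matrix.of_apply,
      smul_eq_mul, Pi.star_apply, Complex.star_def, _root_.map_mul, ← hφz l, ← hφz j]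
    by_cases hlj : l = j
    · subst hlj
      simp only [Matrix.diagonal_apply_eq]
      linear_combination (Complex.I * ((lam l : ℂ))) * hφu l
    · simp only [Matrix.diagonal_apply_ne _ hlj]
      ring
  · funext x
    rw [Matrix.mulVec_diagonal]
    exact hφz x

/-- Theorem 3: if `λ` is strongly dominant and `B_{λ,μ}` is
invertible, then `O^G_{(U_λ,α)} ∩ pr⁻¹(O^K_{U_μ})` is either empty or a single
`U(n)`-orbit, i.e. `n(O^G_{(λ,α)}, O^K_μ) ≤ 1`. -/
theorem corwinGreenleaf_le_one_of_stronglyDominant {n : ℕ} (hn : 2 ≤ n)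
    (α : ℝ) (hα : α ≠ 0)
    (lam : Fin n → ℤ) (hlam : ∀ i j : Fin n, i < j → lam j < lam i)
    (mu : Fin n → ℤ) (hmu : ∀ i j : Fin n, i ≤ j → mu j ≤ mu i)
    (hB : IsUnit (Bmat lam mu).det) :
    ∀ p ∈ genOrbit (Umat lam) α ∩ prInv (Umat mu),
      ∀ q ∈ genOrbit (Umat lam) α ∩ prInv (Umat mu),
        ∃ k : Matrix.unitaryGroup (Fin n) ℂ,
          q = ((k : Matrix (Fin n) (Fin n) ℂ) * p.1 * star (k : Matrix (Fin n) (Fin n) ℂ),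
               (k : Matrix (Fin n) (Fin n) ℂ).mulVec p.2) := by
  rintro p ⟨⟨k, z, hpz⟩, ⟨A, hpA⟩⟩ q ⟨⟨k', w, hqw⟩, ⟨A', hqA⟩⟩
  set c : ℂ := (Complex.I * (α : ℂ)) / 2 with hc0
  have hc : c ≠ 0 :=
    div_ne_zero (mul_ne_zero Complex.I_ne_zero (Complex.ofReal_ne_zero.mpr hα)) two_ne_zero
  have hk1 : (k : Matrix (Fin n) (Fin n) ℂ) * star (k : Matrix (Fin n) (Fin n) ℂ) = 1 :=
    Matrix.mem_unitaryGroup_iff.mp k.2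
  have hk2 : star (k : Matrix (Fin n) (Fin n) ℂ) * (k : Matrix (Fin n) (Fin n) ℂ) = 1 :=
    Matrix.mem_unitaryGroup_iff'.mp k.2
  have hk'1 : (k' : Matrix (Fin n) (Fin n) ℂ) * star (k' : Matrix (Fin n) (Fin n) ℂ) = 1 :=
    Matrix.mem_unitaryGroup_iff.mp k'.2
  have hA1 : (A : Matrix (Fin n) (Fin n) ℂ) * star (A : Matrix (Fin n) (Fin n) ℂ) = 1 :=
    Matrix.mem_unitaryGroup_iff.mp A.2
  have hA'1 : (A' : Matrix (Fin n) (Fin n) ℂ) * star (A' : Matrix (Fin n) (Fin n) ℂ) = 1 :=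
    Matrix.mem_unitaryGroup_iff.mp A'.2
  set Mz : Matrix (Fin n) (Fin n) ℂ := Umat lam + c • outerMat z z with hMz
  set Mw : Matrix (Fin n) (Fin n) ℂ := Umat lam + c • outerMat w w with hMw
  have hp1 : (k : Matrix (Fin n) (Fin n) ℂ) * Mz * star (k : Matrix (Fin n) (Fin n) ℂ)
      = (A : Matrix (Fin n) (Fin n) ℂ) * Umat mu * star (A : Matrix (Fin n) (Fin n) ℂ) := by
    rw [hpz] at hpA; exact hpA
  have hq1 : (k' : Matrix (Fin n) (Fin n) ℂ) * Mw * star (k' : Matrix (Fin n) (Fin n) ℂ)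
      = (A' : Matrix (Fin n) (Fin n) ℂ) * Umat mu * star (A' : Matrix (Fin n) (Fin n) ℂ) := by
    rw [hqw] at hqA; exact hqA
  have hdz : ∀ x : ℂ, (Mz - x • 1).det = (Umat mu - x • 1).det :=
    fun x => det_sub_smul_one_eq hk1 hA1 hp1 x
  have hdw : ∀ x : ℂ, (Mw - x • 1).det = (Umat mu - x • 1).det :=
    fun x => det_sub_smul_one_eq hk'1 hA'1 hq1 x
  have hnorm : ∀ j, Complex.normSq (z j) = Complex.normSq (w j) :=
    normSq_eq lam mu hB c hc z w hdz hdw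
  obtain ⟨U, hU1, hU2, hUM, hUz⟩ := phase_conj lam c z w hnorm
  set Km : Matrix (Fin n) (Fin n) ℂ :=
    (k' : Matrix (Fin n) (Fin n) ℂ) * U * star (k : Matrix (Fin n) (Fin n) ℂ) with hKm
  have can_k : ∀ X : Matrix (Fin n) (Fin n) ℂ,
      star (k : Matrix (Fin n) (Fin n) ℂ) * ((k : Matrix (Fin n) (Fin n) ℂ) * X) = X :=
    fun X => by rw [← Matrix.mul_assoc, hk2, Matrix.one_mul]
  have can_U : ∀ X : Matrix (Fin n) (Fin n) ℂ, U * (star U * X) = X :=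
    fun X => by rw [← Matrix.mul_assoc, hU1, Matrix.one_mul]
  have hstarKm : star Km
      = (k : Matrix (Fin n) (Fin n) ℂ) * (star U * star (k' : Matrix (Fin n) (Fin n) ℂ)) := by
    simp only [hKm, Matrix.star_mul, star_star, Matrix.mul_assoc]
  have hKmem : Km ∈ Matrix.unitaryGroup (Fin n) ℂ := by
    rw [Matrix.mem_unitaryGroup_iff, hstarKm]
    simp only [hKm, Matrix.mul_assoc]
    rw [can_k, can_U, hk'1]
  refine ⟨⟨Km, hKmem⟩, ?_⟩
  rw [hqw, hpz]
  have comp1 : (k' : Matrix (Fin n) (Fin n) ℂ) * Mw * star (k' : Matrix (Fin n) (Fin n) ℂ)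
      = Km * ((k : Matrix (Fin n) (Fin n) ℂ) * Mz * star (k : Matrix (Fin n) (Fin n) ℂ))
        * star Km := by
    rw [hstarKm]
    have can_UM : ∀ X : Matrix (Fin n) (Fin n) ℂ, U * (Mz * (star U * X)) = Mw * X := by
      intro X
      calc U * (Mz * (star U * X)) = (U * Mz * star U) * X := by
            simp only [Matrix.mul_assoc]
      _ = Mw * X := by rw [hUM]
    simp only [hKm, Matrix.mul_assoc]
    simp only [can_k]
    rw [can_UM]
  have comp2 : (α : ℂ) • (k' : Matrix (Fin n) (Fin n) ℂ).mulVec w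
      = Km.mulVec ((α : ℂ) • (k : Matrix (Fin n) (Fin n) ℂ).mulVec z) := by
    rw [Matrix.mulVec_smul]
    congr 1
    rw [Matrix.mulVec_mulVec]
    have hKk : Km * (k : Matrix (Fin n) (Fin n) ℂ) = (k' : Matrix (Fin n) (Fin n) ℂ) * U := by
      rw [hKm, Matrix.mul_assoc, hk2, Matrix.mul_one]
    rw [hKk, ← Matrix.mulVec_mulVec, hUz]
  exact Prod.ext comp1 comp2
end

section
/- Let n ≥ 2, let α be a nonzero real number, let a ∈ ℤ, let λ = (a,…,a) ∈ ℤⁿ, and let μ = (μ_1,…,μ_n) ∈ ℤⁿ be dominant (μ_1 ≥ … ≥ μ_n) with μ ≠ λ. Then the set O^G_{(U_λ,α)} ∩ pr⁻¹(O^K_{U_μ}) is either empty or consists of a single U(n)-orbit under the action k·(M,v) = (k M k*, k v); that is, n(O^G_{(λ,α)}, O^K_μ) ≤ 1. (First assertion of Theorem 4.) -/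
open Matrix Complex Finset

lemma conj_outer {n : ℕ} (k : Matrix (Fin n) (Fin n) ℂ) (z : Fin n → ℂ) :
    k * outerMat z z * star k = outerMat (k.mulVec z) (k.mulVec z) := by
  ext l j
  simp only [Matrix.mul_apply, Matrix.star_apply, outerMat, Matrix.of_apply, Matrix.mulVec,
    dotProduct, map_sum, Finset.sum_mul, Finset.mul_sum, _root_.map_mul]
  exact Finset.sum_congr rfl fun s _ => Finset.sum_congr rfl fun t _ => by
    simp [RingHom.star_def]; ring

lemma trace_outer {n : ℕ} (z : Fin n → ℂ) :
    (outerMat z z).trace = ∑ i, z i * (starRingEnd ℂ) (z i) := by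
  simp [Matrix.trace, outerMat, Matrix.diag]

lemma exists_unitary_mulVec {n : ℕ} (hn : 0 < n) (w w' : Fin n → ℂ) (hw : w ≠ 0) (hw' : w' ≠ 0)
    (hsum : ∑ i, w i * (starRingEnd ℂ) (w i) = ∑ i, w' i * (starRingEnd ℂ) (w' i)) :
    ∃ k : Matrix.unitaryGroup (Fin n) ℂ, (k : Matrix (Fin n) (Fin n) ℂ).mulVec w = w' := by
  haveI : NeZero n := ⟨hn.ne'⟩
  let W : EuclideanSpace ℂ (Fin n) := WithLp.toLp 2 w
  let W' : EuclideanSpace ℂ (Fin n) := WithLp.toLp 2 w'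
  have hWW : (inner ℂ W W : ℂ) = inner ℂ W' W' := by
    simp only [PiLp.inner_apply, RCLike.inner_apply']
    calc ∑ i, (starRingEnd ℂ) (W i) * W i = ∑ i, w i * (starRingEnd ℂ) (w i) :=
          Finset.sum_congr rfl fun i _ => mul_comm _ _
      _ = ∑ i, w' i * (starRingEnd ℂ) (w' i) := hsum
      _ = ∑ i, (starRingEnd ℂ) (W' i) * W' i := Finset.sum_congr rfl fun i _ => mul_comm _ _
  have hnorm : ‖W‖ = ‖W'‖ := by
    have h1 := (inner_self_eq_norm_sq_to_K (𝕜 := ℂ) W).symm.trans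
      (hWW.trans (inner_self_eq_norm_sq_to_K (𝕜 := ℂ) W'))
    have h2 : ‖W‖ ^ 2 = ‖W'‖ ^ 2 := by exact_mod_cast h1
    nlinarith [norm_nonneg W, norm_nonneg W']
  have hW0 : W ≠ 0 := fun h => hw (congrArg WithLp.ofLp h)
  have hW'0 : W' ≠ 0 := fun h => hw' (congrArg WithLp.ofLp h)
  set c : ℂ := (‖W‖ : ℂ) with hc
  have hc0 : c ≠ 0 := by
    simpa [hc, Complex.ofReal_eq_zero, norm_eq_zero] using hW0
  -- unit vectors
  let u : EuclideanSpace ℂ (Fin n) := c⁻¹ • W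
  let u' : EuclideanSpace ℂ (Fin n) := c⁻¹ • W'
  have hnW : ‖W‖ ≠ 0 := norm_ne_zero_iff.mpr hW0
  have hu : ‖u‖ = 1 := by
    rw [norm_smul, norm_inv, hc, Complex.norm_real, Real.norm_eq_abs,
      _root_.abs_of_nonneg (norm_nonneg W), inv_mul_cancel₀ hnW]
  have hu' : ‖u'‖ = 1 := by
    rw [norm_smul, norm_inv, hc, Complex.norm_real, Real.norm_eq_abs,
      _root_.abs_of_nonneg (norm_nonneg W), hnorm, inv_mul_cancel₀ (hnorm ▸ hnW)]
  -- orthonormal bases starting with u and u'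
  have hcard : Module.finrank ℂ (EuclideanSpace ℂ (Fin n)) = Fintype.card (Fin n) := by
    simp [finrank_euclideanSpace_fin]
  have hob : ∀ v : EuclideanSpace ℂ (Fin n), ‖v‖ = 1 →
      ∃ b : OrthonormalBasis (Fin n) ℂ (EuclideanSpace ℂ (Fin n)), b 0 = v := by
    intro v hv
    have horth : Orthonormal ℂ (Set.restrict {(0 : Fin n)} fun _ : Fin n => v) := by
      constructor
      · intro i
        exact hv
      · intro i j hij
        exact absurd (Subtype.ext ((i.2 : (i : Fin n) ∈ {(0:Fin n)}).trans
          ((j.2 : (j : Fin n) ∈ {(0:Fin n)}).symm))) hij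
    obtain ⟨b, hb⟩ := horth.exists_orthonormalBasis_extension_of_card_eq hcard
    exact ⟨b, hb 0 rfl⟩
  obtain ⟨b, hb⟩ := hob u hu
  obtain ⟨b', hb'⟩ := hob u' hu'
  let e : OrthonormalBasis (Fin n) ℂ (EuclideanSpace ℂ (Fin n)) :=
    EuclideanSpace.basisFun (Fin n) ℂ
  let f := b.repr.trans b'.repr.symm
  have hmem1 := e.toMatrix_orthonormalBasis_mem_unitary b'
  have hmem2 := b.toMatrix_orthonormalBasis_mem_unitary e
  refine ⟨⟨e.toBasis.toMatrix ⇑b' * b.toBasis.toMatrix ⇑e, mul_mem hmem1 hmem2⟩, ?_⟩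
  -- key computation
  have hrepr : ∀ (ob : OrthonormalBasis (Fin n) ℂ (EuclideanSpace ℂ (Fin n)))
      (x : EuclideanSpace ℂ (Fin n)), ⇑(ob.toBasis.repr x) = fun i => ob.repr x i := by
    intro ob x; funext i; rw [ob.coe_toBasis_repr_apply]
  have step1 : (b.toBasis.toMatrix ⇑e).mulVec w = fun i => b.repr W i := by
    have : w = ⇑(e.toBasis.repr W) := by
      funext i
      rw [e.coe_toBasis_repr_apply]
      rfl
    rw [show (⇑e : Fin n → EuclideanSpace ℂ (Fin n)) = ⇑e.toBasis by rw [e.coe_toBasis], this,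
      Module.Basis.toMatrix_mulVec_repr, hrepr]
  have step2 : (e.toBasis.toMatrix ⇑b').mulVec (fun i => b.repr W i) = f W := by
    have h1 : (fun i => b.repr W i) = ⇑(b'.toBasis.repr (f W)) := by
      funext i
      rw [b'.coe_toBasis_repr_apply]
      simp [f]
    rw [show (⇑b' : Fin n → EuclideanSpace ℂ (Fin n)) = ⇑b'.toBasis by rw [b'.coe_toBasis], h1,
      Module.Basis.toMatrix_mulVec_repr, hrepr]
    funext i
    rfl
  have hfW : f W = W' := by
    have hWu : W = c • u := by
      rw [smul_smul, mul_inv_cancel₀ hc0, one_smul]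
    have hfu : f u = u' := by
      rw [← hb, ← hb']
      show b'.repr.symm (b.repr (b 0)) = b' 0
      rw [OrthonormalBasis.repr_self, OrthonormalBasis.repr_symm_single]
    rw [hWu, _root_.map_smul, hfu, show u' = c⁻¹ • W' from rfl, smul_smul,
      mul_inv_cancel₀ hc0, one_smul]
  show ((e.toBasis.toMatrix ⇑b' * b.toBasis.toMatrix ⇑e)).mulVec w = w'
  rw [← Matrix.mulVec_mulVec, step1, step2, hfW]

/-- first assertion of Theorem 4: if `λ = (a,…,a)` and `μ ≠ λ` is
dominant, then `O^G_{(U_λ,α)} ∩ pr⁻¹(O^K_{U_μ})` is either empty or a single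
`U(n)`-orbit, i.e. `n(O^G_{(λ,α)}, O^K_μ) ≤ 1`. -/
theorem corwinGreenleaf_le_one_of_scalar {n : ℕ} (hn : 2 ≤ n)
    (α : ℝ) (hα : α ≠ 0) (a : ℤ)
    (mu : Fin n → ℤ) (hmu : ∀ i j : Fin n, i ≤ j → mu j ≤ mu i)
    (hne : mu ≠ fun _ => a) :
    ∀ p ∈ genOrbit (Umat fun _ : Fin n => a) α ∩ prInv (Umat mu),
      ∀ q ∈ genOrbit (Umat fun _ : Fin n => a) α ∩ prInv (Umat mu),
        ∃ k : Matrix.unitaryGroup (Fin n) ℂ,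
          q = ((k : Matrix (Fin n) (Fin n) ℂ) * p.1 * star (k : Matrix (Fin n) (Fin n) ℂ),
               (k : Matrix (Fin n) (Fin n) ℂ).mulVec p.2) := by
  set U : Matrix (Fin n) (Fin n) ℂ := Umat (fun _ : Fin n => a) with hUdef
  set c : ℂ := (Complex.I * (α : ℂ)) / 2 with hcdef
  have hc0 : c ≠ 0 := by
    simp [hcdef, Complex.I_ne_zero, Complex.ofReal_eq_zero, hα]
  have hU : U = (Complex.I * (a : ℂ)) • (1 : Matrix (Fin n) (Fin n) ℂ) := by
    ext i j
    by_cases h : i = j <;>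
      simp [hUdef, Umat, Matrix.diagonal, Matrix.one_apply, h]
  -- conjugation by a unitary fixes U and acts on the outer part
  have hconj : ∀ (k : Matrix (Fin n) (Fin n) ℂ), k ∈ Matrix.unitaryGroup (Fin n) ℂ →
      ∀ w : Fin n → ℂ, k * (U + c • outerMat w w) * star k
        = U + c • outerMat (k.mulVec w) (k.mulVec w) := by
    intro k hk w
    have h1 : k * star k = 1 := Matrix.mem_unitaryGroup_iff.mp hk
    rw [hU]
    simp only [Matrix.mul_add, Matrix.add_mul, Matrix.mul_smul, Matrix.smul_mul, Matrix.mul_one]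
    rw [h1, conj_outer]
  -- characterization of points of the orbit
  have hchar : ∀ p ∈ genOrbit U α, ∃ w : Fin n → ℂ,
      p.1 = U + c • outerMat w w ∧ p.2 = (α : ℂ) • w := by
    rintro p ⟨k, z, rfl⟩
    exact ⟨(k : Matrix (Fin n) (Fin n) ℂ).mulVec z, hconj k k.2 z, rfl⟩
  -- trace identity: pins down the "size" of w
  have htrace : ∀ w : Fin n → ℂ, ∀ A : Matrix.unitaryGroup (Fin n) ℂ,
      U + c • outerMat w w = (A : Matrix (Fin n) (Fin n) ℂ) * Umat mu *
        star (A : Matrix (Fin n) (Fin n) ℂ) →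
      c * (∑ i, w i * (starRingEnd ℂ) (w i)) = (Umat mu).trace - U.trace := by
    intro w A h
    have h2 : star (A : Matrix (Fin n) (Fin n) ℂ) * A = 1 :=
      Matrix.mem_unitaryGroup_iff'.mp A.2
    have h3 : ((A : Matrix (Fin n) (Fin n) ℂ) * Umat mu *
        star (A : Matrix (Fin n) (Fin n) ℂ)).trace = (Umat mu).trace := by
      rw [Matrix.trace_mul_cycle, h2, Matrix.one_mul]
    have := congrArg Matrix.trace h
    rw [Matrix.trace_add, Matrix.trace_smul, h3, trace_outer] at this
    rw [smul_eq_mul] at this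
    linear_combination this
  -- nonvanishing of w
  have hnz : ∀ w : Fin n → ℂ, ∀ A : Matrix.unitaryGroup (Fin n) ℂ,
      U + c • outerMat w w = (A : Matrix (Fin n) (Fin n) ℂ) * Umat mu *
        star (A : Matrix (Fin n) (Fin n) ℂ) → w ≠ 0 := by
    intro w A h hw0
    subst hw0
    have houter : outerMat (0 : Fin n → ℂ) 0 = 0 := by
      ext l j; simp [outerMat]
    rw [houter, smul_zero, add_zero] at h
    have h1 : (A : Matrix (Fin n) (Fin n) ℂ) * star (A : Matrix (Fin n) (Fin n) ℂ) = 1 :=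
      Matrix.mem_unitaryGroup_iff.mp A.2
    have h2 : star (A : Matrix (Fin n) (Fin n) ℂ) * A = 1 :=
      Matrix.mem_unitaryGroup_iff'.mp A.2
    have hX : Umat mu = U := by
      have := congrArg (fun M => star (A : Matrix (Fin n) (Fin n) ℂ) * M *
        (A : Matrix (Fin n) (Fin n) ℂ)) h
      rw [hU] at this ⊢
      rw [Matrix.mul_smul, Matrix.smul_mul, Matrix.mul_one, h2] at this
      calc Umat mu = 1 * Umat mu * 1 := by rw [Matrix.one_mul, Matrix.mul_one]
        _ = star (A : Matrix (Fin n) (Fin n) ℂ) *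
              ((A : Matrix (Fin n) (Fin n) ℂ) * Umat mu *
                star (A : Matrix (Fin n) (Fin n) ℂ)) * (A : Matrix (Fin n) (Fin n) ℂ) := by
            rw [← h2]; noncomm_ring
        _ = (Complex.I * (a : ℂ)) • 1 := by rw [← this]
    apply hne
    funext i
    have := congrFun (congrFun (congrArg (fun M => M) hX) i) i
    rw [hU] at this
    simp only [Umat, Matrix.smul_apply, Matrix.diagonal_apply_eq, Matrix.one_apply_eq,
      smul_eq_mul, mul_one] at this
    have : ((mu i : ℤ) : ℂ) = ((a : ℤ) : ℂ) := mul_left_cancel₀ Complex.I_ne_zero this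
    exact_mod_cast this
  -- main argument
  rintro p ⟨hpG, A, hpA⟩ q ⟨hqG, B, hqB⟩
  obtain ⟨w, hp1, hp2⟩ := hchar p hpG
  obtain ⟨w', hq1, hq2⟩ := hchar q hqG
  rw [hp1] at hpA
  rw [hq1] at hqB
  have hw : w ≠ 0 := hnz w A hpA
  have hw' : w' ≠ 0 := hnz w' B hqB
  have hsum : ∑ i, w i * (starRingEnd ℂ) (w i) = ∑ i, w' i * (starRingEnd ℂ) (w' i) :=
    mul_left_cancel₀ hc0 ((htrace w A hpA).trans (htrace w' B hqB).symm)
  obtain ⟨k, hk⟩ := exists_unitary_mulVec (lt_of_lt_of_le two_pos hn) w w' hw hw' hsum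
  refine ⟨k, Prod.ext ?_ ?_⟩
  · show q.1 = _
    rw [hq1, hp1, hconj k k.2 w, hk]
  · show q.2 = _
    rw [hq2, hp2, ← hk, Matrix.mulVec_smul]
end

section
/- Let n ≥ 2, let α > 0 be real, and let a, b ∈ ℝ with b > a. Then { z ∈ ℂⁿ : ∃ A ∈ U(n), i·a·I + (iα/2)·zz* = A·(i·diag(b, a, …, a))·A* } = { z ∈ ℂⁿ : ‖z‖² = 2(b − a)/α }. In particular this set is nonempty, so for λ = (a,…,a) and μ = (b, a, …, a) the intersection O^G_{(U_λ,α)} ∩ pr⁻¹(O^K_{U_μ}) is nonempty, i.e. n(O^G_{(λ,α)}, O^K_μ) ≠ 0. (Sufficiency in Theorem 4, Case α > 0 with p = 1.) -/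
open Matrix Complex Finset

/-- trace of `outerMat z z` is the squared norm. -/
lemma trace_outerMat {n : ℕ} (z : Fin n → ℂ) :
    (outerMat z z).trace = ((∑ j, Complex.normSq (z j) : ℝ) : ℂ) := by
  simp [Matrix.trace, Matrix.diag, outerMat, Complex.mul_conj]

/-- A unitary matrix with prescribed (unit-norm) first column exists. -/
lemma exists_unitary_first_col {n : ℕ} [NeZero n] (w : Fin n → ℂ)
    (hw : ∑ j, Complex.normSq (w j) = 1) :
    ∃ A : Matrix.unitaryGroup (Fin n) ℂ,
      ∀ l, (A : Matrix (Fin n) (Fin n) ℂ) l 0 = w l := by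
  classical
  set W : EuclideanSpace ℂ (Fin n) := WithLp.toLp 2 w with hW
  have hinner : ∀ x y : EuclideanSpace ℂ (Fin n),
      (inner ℂ x y : ℂ) = ∑ l, (starRingEnd ℂ) (x l) * y l := fun x y => by
    simp [PiLp.inner_apply, RCLike.inner_apply, mul_comm]
  have hWW : (inner ℂ W W : ℂ) = 1 := by
    rw [hinner]
    have : ∀ l, (starRingEnd ℂ) (W l) * W l = ((Complex.normSq (w l) : ℝ) : ℂ) := by
      intro l
      rw [mul_comm, Complex.mul_conj]
    rw [Finset.sum_congr rfl fun l _ => this l]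
    exact_mod_cast hw
  have horth : Orthonormal ℂ (Set.restrict {(0 : Fin n)} (fun _ : Fin n => W)) := by
    rw [orthonormal_iff_ite]
    rintro ⟨i, hi⟩ ⟨j, hj⟩
    simp only [Set.mem_singleton_iff] at hi hj
    subst hi; subst hj
    rw [if_pos rfl]; exact hWW
  obtain ⟨b, hb⟩ := horth.exists_orthonormalBasis_extension_of_card_eq (by simp)
  have hb0 : b 0 = W := hb 0 rfl
  have hmem : (Matrix.of fun l j : Fin n => b j l) ∈ Matrix.unitaryGroup (Fin n) ℂ := by
    rw [Matrix.mem_unitaryGroup_iff']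
    ext i j
    have := (orthonormal_iff_ite.mp b.orthonormal) i j
    rw [hinner] at this
    simpa [Matrix.mul_apply, Matrix.star_apply, Matrix.one_apply] using this
  refine ⟨⟨_, hmem⟩, fun l => ?_⟩
  show b 0 l = w l
  rw [hb0]

/-- Conjugation of the diagonal matrix `diag(b,a,…,a)` by a unitary. -/
lemma conj_diag_eq {n : ℕ} [NeZero n] (A : Matrix (Fin n) (Fin n) ℂ)
    (hA : A * star A = 1) (a b : ℂ) :
    A * Matrix.diagonal (fun i : Fin n => if (i : ℕ) = 0 then b else a) * star A
      = a • (1 : Matrix (Fin n) (Fin n) ℂ)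
        + (b - a) • outerMat (fun l => A l 0) (fun l => A l 0) := by
  classical
  ext l j
  have h1 : ∑ k, A l k * (starRingEnd ℂ) (A j k) = (1 : Matrix (Fin n) (Fin n) ℂ) l j := by
    rw [← hA, Matrix.mul_apply]
    rfl
  have expand : ∀ k : Fin n,
      A l k * (if (k : ℕ) = 0 then b else a) * (starRingEnd ℂ) (A j k)
      = a * (A l k * (starRingEnd ℂ) (A j k))
        + (if k = 0 then (b - a) * (A l k * (starRingEnd ℂ) (A j k)) else 0) := by
    intro k
    by_cases hk : k = 0
    · subst hk
      norm_num
      ring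
    · have hk' : ¬ ((k : ℕ) = 0) := by
        simp only [Fin.ext_iff, Fin.val_zero] at hk
        omega
      simp only [if_neg hk, if_neg hk']
      ring
  calc (A * Matrix.diagonal (fun i : Fin n => if (i : ℕ) = 0 then b else a) * star A) l j
      = ∑ k, A l k * (if (k : ℕ) = 0 then b else a) * (starRingEnd ℂ) (A j k) := by
        rw [Matrix.mul_apply]
        refine Finset.sum_congr rfl fun k _ => ?_
        rw [Matrix.mul_diagonal, Matrix.star_apply]
        rfl
    _ = ∑ k, (a * (A l k * (starRingEnd ℂ) (A j k))
          + (if k = 0 then (b - a) * (A l k * (starRingEnd ℂ) (A j k)) else 0)) := by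
        exact Finset.sum_congr rfl fun k _ => expand k
    _ = a * ∑ k, A l k * (starRingEnd ℂ) (A j k)
          + (b - a) * (A l 0 * (starRingEnd ℂ) (A j 0)) := by
        rw [Finset.sum_add_distrib, ← Finset.mul_sum, Finset.sum_ite_eq']
        simp
    _ = (a • (1 : Matrix (Fin n) (Fin n) ℂ)
        + (b - a) • outerMat (fun l => A l 0) (fun l => A l 0)) l j := by
        rw [h1]
        simp [outerMat, Matrix.add_apply, Matrix.smul_apply, smul_eq_mul]

/-- sufficiency in Theorem 4, case `α > 0`, `p = 1`: for `b > a`,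
`F_μ = {z : ‖z‖² = 2(b−a)/α}` where `μ = (b,a,…,a)`; in particular it is
nonempty, hence `O^G_{(U_λ,α)} ∩ pr⁻¹(O^K_{U_μ})` is nonempty for `λ = (a,…,a)`,
i.e. `n(O^G_{(λ,α)}, O^K_μ) ≠ 0`. -/
theorem Fmu_nonempty_pos {n : ℕ} (hn : 2 ≤ n) (α : ℝ) (hα : 0 < α)
    (a b : ℝ) (hab : a < b) :
    {z : Fin n → ℂ | ∃ A : Matrix.unitaryGroup (Fin n) ℂ,
        (Complex.I * (a : ℂ)) • (1 : Matrix (Fin n) (Fin n) ℂ)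
            + ((Complex.I * (α : ℂ)) / 2) • outerMat z z
          = (A : Matrix (Fin n) (Fin n) ℂ) *
              (Complex.I • Matrix.diagonal fun i : Fin n =>
                if (i : ℕ) = 0 then (b : ℂ) else (a : ℂ)) *
              star (A : Matrix (Fin n) (Fin n) ℂ)}
      = {z : Fin n → ℂ | ∑ j, Complex.normSq (z j) = 2 * (b - a) / α}
    ∧ (genOrbit ((Complex.I * (a : ℂ)) • (1 : Matrix (Fin n) (Fin n) ℂ)) α ∩
        prInv (Complex.I • Matrix.diagonal fun i : Fin n =>
          if (i : ℕ) = 0 then (b : ℂ) else (a : ℂ))).Nonempty := by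
  haveI : NeZero n := ⟨by omega⟩
  have hα' : (α : ℂ) ≠ 0 := by exact_mod_cast hα.ne'
  -- rewriting of the conjugated matrix
  have key : ∀ A : Matrix.unitaryGroup (Fin n) ℂ,
      (A : Matrix (Fin n) (Fin n) ℂ) *
        (Complex.I • Matrix.diagonal fun i : Fin n =>
          if (i : ℕ) = 0 then (b : ℂ) else (a : ℂ)) *
        star (A : Matrix (Fin n) (Fin n) ℂ)
      = (Complex.I * (a : ℂ)) • (1 : Matrix (Fin n) (Fin n) ℂ)
        + (Complex.I * ((b : ℂ) - a)) • outerMat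
            (fun l => (A : Matrix (Fin n) (Fin n) ℂ) l 0)
            (fun l => (A : Matrix (Fin n) (Fin n) ℂ) l 0) := by
    intro A
    have hA : (A : Matrix (Fin n) (Fin n) ℂ) * star (A : Matrix (Fin n) (Fin n) ℂ) = 1 :=
      Matrix.mem_unitaryGroup_iff.mp A.2
    rw [Matrix.mul_smul, Matrix.smul_mul, conj_diag_eq _ hA, smul_add, smul_smul, smul_smul]
  -- the set equality
  have hset : {z : Fin n → ℂ | ∃ A : Matrix.unitaryGroup (Fin n) ℂ,
        (Complex.I * (a : ℂ)) • (1 : Matrix (Fin n) (Fin n) ℂ)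
            + ((Complex.I * (α : ℂ)) / 2) • outerMat z z
          = (A : Matrix (Fin n) (Fin n) ℂ) *
              (Complex.I • Matrix.diagonal fun i : Fin n =>
                if (i : ℕ) = 0 then (b : ℂ) else (a : ℂ)) *
              star (A : Matrix (Fin n) (Fin n) ℂ)}
      = {z : Fin n → ℂ | ∑ j, Complex.normSq (z j) = 2 * (b - a) / α} := by
    ext z
    simp only [Set.mem_setOf_eq]
    constructor
    · rintro ⟨A, hA⟩
      rw [key A] at hA
      have hA2 : ((Complex.I * (α : ℂ)) / 2) • outerMat z z
          = (Complex.I * ((b : ℂ) - a)) • outerMat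
              (fun l => (A : Matrix (Fin n) (Fin n) ℂ) l 0)
              (fun l => (A : Matrix (Fin n) (Fin n) ℂ) l 0) := by
        have := hA
        exact add_left_cancel this
      -- take traces
      have htr := congrArg Matrix.trace hA2
      rw [Matrix.trace_smul, Matrix.trace_smul, trace_outerMat, trace_outerMat] at htr
      -- the norm of the first column of a unitary is 1
      have hcol : (∑ l, Complex.normSq ((A : Matrix (Fin n) (Fin n) ℂ) l 0) : ℝ) = 1 := by
        have hA' : star (A : Matrix (Fin n) (Fin n) ℂ) * (A : Matrix (Fin n) (Fin n) ℂ) = 1 :=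
          Matrix.mem_unitaryGroup_iff'.mp A.2
        have hthis := congrFun (congrFun hA' 0) 0
        rw [Matrix.mul_apply, Matrix.one_apply_eq] at hthis
        have h2 : ∑ l, ((Complex.normSq ((A : Matrix (Fin n) (Fin n) ℂ) l 0) : ℝ) : ℂ)
            = (1 : ℂ) := by
          rw [← hthis]
          refine Finset.sum_congr rfl fun l _ => ?_
          rw [Matrix.star_apply, mul_comm, Complex.star_def, Complex.mul_conj]
        exact_mod_cast h2
      rw [hcol] at htr
      simp only [smul_eq_mul, Complex.ofReal_one, mul_one] at htr
      have h2 : (α : ℂ) * ((∑ j, Complex.normSq (z j) : ℝ) : ℂ)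
          = 2 * ((b : ℂ) - (a : ℂ)) := by
        linear_combination (-2 * Complex.I) * htr
          + ((α : ℂ) * ((∑ j, Complex.normSq (z j) : ℝ) : ℂ) - 2 * ((b : ℂ) - (a : ℂ)))
            * Complex.I_sq
      have h3 : ((∑ j, Complex.normSq (z j) : ℝ) : ℂ) = ((2 * (b - a) / α : ℝ) : ℂ) := by
        rw [Complex.ofReal_div, eq_div_iff hα']
        push_cast at h2 ⊢
        linear_combination h2
      exact_mod_cast h3
    · intro hz
      set S := (2 * (b - a) / α : ℝ) with hS
      have hSpos : 0 < S := div_pos (by linarith) hα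
      set r := Real.sqrt S with hr
      have hrpos : 0 < r := Real.sqrt_pos.mpr hSpos
      have hr2 : r ^ 2 = S := Real.sq_sqrt hSpos.le
      set w : Fin n → ℂ := fun l => ((r⁻¹ : ℝ) : ℂ) * z l with hwdef
      have hw : ∑ j, Complex.normSq (w j) = 1 := by
        have hterm : ∀ j, Complex.normSq (w j) = r⁻¹ ^ 2 * Complex.normSq (z j) := by
          intro j
          rw [hwdef]
          simp only [Complex.normSq_mul, Complex.normSq_ofReal]
          ring
        rw [Finset.sum_congr rfl fun j _ => hterm j, ← Finset.mul_sum, hz, ← hr2]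
        field_simp
      obtain ⟨A, hAcol⟩ := exists_unitary_first_col w hw
      refine ⟨A, ?_⟩
      rw [key A]
      congr 1
      have hcoleq : (fun l => (A : Matrix (Fin n) (Fin n) ℂ) l 0) = w := funext hAcol
      rw [hcoleq]
      have hbaR : (b - a) * (r⁻¹ * r⁻¹) = α / 2 := by
        have h4 : (b - a) * 2 = α * r ^ 2 := by
          rw [hr2, hS]
          field_simp
        field_simp
        linarith [h4]
      have hba : ((b : ℂ) - a) * (((r⁻¹ : ℝ) : ℂ) * ((r⁻¹ : ℝ) : ℂ)) = (α : ℂ) / 2 := by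
        exact_mod_cast hbaR
      ext l j
      simp only [outerMat, Matrix.smul_apply, Matrix.of_apply, smul_eq_mul, hwdef,
        _root_.map_mul, Complex.conj_ofReal]
      linear_combination (-(Complex.I) * (z l * (starRingEnd ℂ) (z j))) * hba
  refine ⟨hset, ?_⟩
  -- nonemptiness
  set r := Real.sqrt (2 * (b - a) / α) with hr
  have hSpos : (0:ℝ) < 2 * (b - a) / α := div_pos (by linarith) hα
  set z₀ : Fin n → ℂ := fun i => if (i : ℕ) = 0 then ((r : ℝ) : ℂ) else 0 with hz₀
  have hz₀norm : ∑ j, Complex.normSq (z₀ j) = 2 * (b - a) / α := by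
    have : ∀ j : Fin n, Complex.normSq (z₀ j) = if j = 0 then r ^ 2 else 0 := by
      intro j
      by_cases hj : j = 0
      · subst hj; simp [hz₀, Complex.normSq_ofReal]; ring
      · have : ((j : ℕ) = 0) = False := eq_false fun h => hj (Fin.ext (by rw [h, Fin.val_zero]))
        simp [hz₀, this, hj]
    rw [Finset.sum_congr rfl fun j _ => this j, Finset.sum_ite_eq']
    simp [hr, Real.sq_sqrt hSpos.le]
  have hz₀mem : z₀ ∈ {z : Fin n → ℂ | ∃ A : Matrix.unitaryGroup (Fin n) ℂ,
        (Complex.I * (a : ℂ)) • (1 : Matrix (Fin n) (Fin n) ℂ)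
            + ((Complex.I * (α : ℂ)) / 2) • outerMat z z
          = (A : Matrix (Fin n) (Fin n) ℂ) *
              (Complex.I • Matrix.diagonal fun i : Fin n =>
                if (i : ℕ) = 0 then (b : ℂ) else (a : ℂ)) *
              star (A : Matrix (Fin n) (Fin n) ℂ)} := by
    rw [hset]
    exact hz₀norm
  obtain ⟨A, hA⟩ := hz₀mem
  refine ⟨((Complex.I * (a : ℂ)) • (1 : Matrix (Fin n) (Fin n) ℂ)
      + ((Complex.I * (α : ℂ)) / 2) • outerMat z₀ z₀, (α : ℂ) • z₀), ?_, A, ?_⟩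
  · refine ⟨1, z₀, ?_⟩
    simp
  · exact hA
end
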